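/- arXiv:1401.7203 — 5 statements merged into one kernel-verified Lean document; each statement's English description precedes it below -/
import Mathlib

section
/- If L is a regular language over a finite alphabet X, then the cyclic closure cyc(L), consisting of all cyclic permutations of words in L, is also a regular language. -/
/-- The cyclic closure of a language: all cyclic permutations of words in `L`. -/
def cyclicClosure {X : Type*} (L : Language X) : Language X :=
  {w | ∃ u v : List X, u ++ v ∈ L ∧ w = v ++ u}

lemma DFA_mem_accepts' {X σ : Type*} (M : DFA X σ) (x : List X) :
    x ∈ M.accepts ↔ M.evalFrom M.start x ∈ M.accept := Iff.rfl

/-- An NFA recognizing the cyclic closure of the language of a DFA `M`. A state `(q, s, b)`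
means: we guessed that the original run is at state `q` at the rotation point; `s` is the
current simulated state; `b` records whether we have already wrapped around. -/
def cycNFA {X σ : Type*} (M : DFA X σ) : NFA X (σ × σ × Bool) where
  step p a := {x | (x.1 = p.1 ∧ x.2.2 = p.2.2 ∧ x.2.1 = M.step p.2.1 a) ∨
      (p.2.2 = false ∧ x.2.2 = true ∧ x.1 = p.1 ∧ p.2.1 ∈ M.accept ∧
        x.2.1 = M.step M.start a)}
  start := {p | p.2.1 = p.1 ∧ p.2.2 = false}
  accept := {p | (p.2.2 = true ∧ p.2.1 = p.1) ∨
      (p.2.2 = false ∧ p.1 = M.start ∧ p.2.1 ∈ M.accept)}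

lemma cycNFA_eval {X σ : Type*} (M : DFA X σ) (w : List X) :
    ∀ q s : σ,
      (((q, s, false) : σ × σ × Bool) ∈ (cycNFA M).eval w ↔ M.evalFrom q w = s) ∧
      (((q, s, true) : σ × σ × Bool) ∈ (cycNFA M).eval w ↔
        ∃ v u, w = v ++ u ∧ u ≠ [] ∧ M.evalFrom q v ∈ M.accept ∧
          M.evalFrom M.start u = s) := by
  induction w using List.reverseRecOn with
  | nil =>
    intro q s
    constructor
    · show ((q, s, false) : σ × σ × Bool) ∈ (cycNFA M).start ↔ _
      simp only [cycNFA, Set.mem_setOf_eq]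
      constructor
      · rintro ⟨rfl, -⟩; rfl
      · intro h; exact ⟨h.symm, trivial⟩
    · show ((q, s, true) : σ × σ × Bool) ∈ (cycNFA M).start ↔ _
      simp only [cycNFA, Set.mem_setOf_eq]
      constructor
      · rintro ⟨-, h⟩; exact absurd h (by simp)
      · rintro ⟨v, u, h, hu, -⟩
        exact absurd (List.append_eq_nil_iff.mp h.symm).2 hu
  | append_singleton w a ih =>
    intro q s
    rw [NFA.eval_append_singleton]
    constructor
    · rw [NFA.mem_stepSet]
      constructor
      · rintro ⟨⟨q', s', b'⟩, ht, hstep⟩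
        simp only [cycNFA, Set.mem_setOf_eq] at hstep
        rcases hstep with ⟨h1, h2, h3⟩ | ⟨-, h, -⟩
        · cases h1; cases h2
          rw [DFA.evalFrom_append_singleton, ((ih q s').1).mp ht, h3]
        · exact absurd h (by simp)
      · intro h
        refine ⟨(q, M.evalFrom q w, false), ((ih q _).1).mpr rfl, ?_⟩
        simp only [cycNFA, Set.mem_setOf_eq]
        exact Or.inl ⟨trivial, trivial, by rw [← h, DFA.evalFrom_append_singleton]⟩
    · rw [NFA.mem_stepSet]
      constructor
      · rintro ⟨⟨q', s', b'⟩, ht, hstep⟩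
        simp only [cycNFA, Set.mem_setOf_eq] at hstep
        rcases hstep with ⟨h1, h2, h3⟩ | ⟨hb, -, h1, hacc, h3⟩
        · cases h1; cases h2.symm
          obtain ⟨v, u, hw, hu, hv, hs⟩ := ((ih q s').2).mp ht
          exact ⟨v, u ++ [a], by rw [hw, List.append_assoc],
            by simp, hv, by rw [DFA.evalFrom_append_singleton, hs, h3]⟩
        · cases h1; cases hb
          exact ⟨w, [a], rfl, by simp, ((ih q s').1).mp ht ▸ hacc,
            by rw [h3]; rfl⟩
      · rintro ⟨v, u, hw, hu, hv, hs⟩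
        obtain ⟨u', b, rfl⟩ := (List.eq_nil_or_concat u).resolve_left hu
        rw [List.concat_eq_append, ← List.append_assoc] at hw
        obtain ⟨hw', hb⟩ := List.append_inj' hw rfl
        obtain rfl : a = b := by simpa using hb
        rcases eq_or_ne u' [] with rfl | hu'
        · obtain rfl : w = v := by simpa using hw'
          refine ⟨(q, M.evalFrom q w, false), ((ih q _).1).mpr rfl, ?_⟩
          simp only [cycNFA, Set.mem_setOf_eq]
          exact Or.inr ⟨trivial, trivial, trivial, hv, by rw [← hs]; rfl⟩
        · refine ⟨(q, M.evalFrom M.start u', true),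
            ((ih q _).2).mpr ⟨v, u', hw', hu', hv, rfl⟩, ?_⟩
          simp only [cycNFA, Set.mem_setOf_eq]
          exact Or.inl ⟨trivial, trivial, by rw [← hs, List.concat_eq_append,
            DFA.evalFrom_append_singleton]⟩

theorem cyclicClosure_isRegular {X : Type*} [Fintype X] (L : Language X)
    (hL : L.IsRegular) : (cyclicClosure L).IsRegular := by
  classical
  obtain ⟨σ, fσ, M, hM⟩ := hL
  refine ⟨Set (σ × σ × Bool), inferInstance, (cycNFA M).toDFA, ?_⟩
  rw [NFA.toDFA_correct]
  ext w
  rw [NFA.mem_accepts]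
  constructor
  · rintro ⟨⟨q, s, b⟩, hacc, hev⟩
    simp only [cycNFA, Set.mem_setOf_eq] at hacc
    rcases hacc with ⟨hb, hsq⟩ | ⟨hb, hq, hs⟩
    · cases hb; cases hsq
      obtain ⟨v, u, hw, hu, hv, hs⟩ := ((cycNFA_eval M w q q).2).mp hev
      refine ⟨u, v, ?_, hw⟩
      rw [← hM, DFA_mem_accepts', DFA.evalFrom_of_append, hs]
      exact hv
    · cases hb; cases hq
      have h := ((cycNFA_eval M w M.start s).1).mp hev
      exact ⟨[], w, by rw [← hM, DFA_mem_accepts']; simpa [h] using hs, by simp⟩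
  · rintro ⟨u, v, huv, rfl⟩
    rcases eq_or_ne u [] with rfl | hu
    · refine ⟨(M.start, M.evalFrom M.start v, false), Or.inr ⟨rfl, rfl, ?_⟩, ?_⟩
      · rw [← hM, DFA_mem_accepts'] at huv; simpa using huv
      · exact ((cycNFA_eval M (v ++ []) M.start (M.evalFrom M.start v)).1).mpr (by simp)
    · refine ⟨(M.evalFrom M.start u, M.evalFrom M.start u, true), Or.inl ⟨rfl, rfl⟩, ?_⟩
      refine ((cycNFA_eval M (v ++ u) _ _).2).mpr ⟨v, u, rfl, hu, ?_, rfl⟩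
      rw [← DFA.evalFrom_of_append, ← DFA_mem_accepts', hM]
      exact huv
end

section
/- Let G be a group generated by a finite inverse-closed set X. If the language of geodesic words Geo(G,X) is regular, then the language of geodesics with respect to cyclic permutation (words all of whose cyclic permutations are geodesic) is also regular. -/
/-- The image in `G` of a word over the generating alphabet `X`, where `f`
sends each letter to the generator it represents. -/
def wordProd {X G : Type*} [Group G] (f : X → G) (w : List X) : G :=
  (w.map f).prod

/-- A word is geodesic if no shorter word represents the same group element. -/
def IsGeodesicWord {X G : Type*} [Group G] (f : X → G) (w : List X) : Prop :=
  ∀ v : List X, wordProd f v = wordProd f w → w.length ≤ v.length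

/-- A word is a geodesic with respect to cyclic permutation if every cyclic
permutation of it is geodesic. -/
def IsCycGeodesicWord {X G : Type*} [Group G] (f : X → G) (w : List X) : Prop :=
  ∀ u v : List X, w = u ++ v → IsGeodesicWord f (v ++ u)

theorem cycClosure_isRegular {α : Type*} {L : Language α} (h : L.IsRegular) :
    Language.IsRegular {w : List α | ∀ u v : List α, w = u ++ v → (v ++ u) ∈ L} := by
  classical
  obtain ⟨σ, _, M, rfl⟩ := h
  set N : DFA α ((σ → σ) × Set (σ × σ)) :=
    { step := fun s a => (fun q => M.step (s.1 q) a,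
        {p | (∃ r, (p.1, r) ∈ s.2 ∧ p.2 = M.step r a) ∨
          (M.step (s.1 p.1) a ∉ M.accept ∧ p.2 = M.start)}),
      start := (id, {p | p.1 ∉ M.accept ∧ p.2 = M.start}),
      accept := {s | ∀ q, (q, q) ∉ s.2} } with hN
  have key : ∀ w : List α, N.eval w =
      (fun q => M.evalFrom q w,
       {p | ∃ u s, w = u ++ s ∧ M.evalFrom p.1 u ∉ M.accept ∧ p.2 = M.evalFrom M.start s}) := by
    intro w
    induction w using List.reverseRecOn with
    | nil =>
      refine Prod.ext rfl ?_
      ext ⟨p1, p2⟩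
      simp only [N, Set.mem_setOf_eq]
      constructor
      · rintro ⟨h1, h2⟩; exact ⟨[], [], rfl, h1, h2⟩
      · rintro ⟨u, s, hus, h1, h2⟩
        obtain ⟨rfl, rfl⟩ := List.append_eq_nil_iff.mp hus.symm
        exact ⟨h1, h2⟩
    | append_singleton w a ih =>
      rw [DFA.eval, DFA.evalFrom_append_singleton, ← DFA.eval, ih]
      refine Prod.ext ?_ ?_
      · funext q
        simp [N, DFA.evalFrom_append_singleton]
      · ext ⟨p1, p2⟩
        simp only [N, Set.mem_setOf_eq]
        constructor
        · rintro (⟨r, ⟨u, s, rfl, hbad, rfl⟩, rfl⟩ | ⟨hbad, rfl⟩)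
          · exact ⟨u, s ++ [a], by simp, hbad, (M.evalFrom_append_singleton _ _ _).symm⟩
          · exact ⟨w ++ [a], [], by simp, by
              rwa [DFA.evalFrom_append_singleton], rfl⟩
        · rintro ⟨u, s, hus, hbad, rfl⟩
          rcases List.eq_nil_or_concat s with rfl | ⟨s', b, rfl⟩
          · simp only [List.append_nil] at hus
            subst hus
            exact Or.inr ⟨by rwa [← DFA.evalFrom_append_singleton], rfl⟩
          · rw [List.concat_eq_append, ← List.append_assoc] at hus
            obtain ⟨hw, hab⟩ := List.append_inj' hus rfl
            obtain rfl : a = b := List.singleton_injective hab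
            left
            exact ⟨M.evalFrom M.start s', ⟨u, s', hw, hbad, rfl⟩, by
              rw [List.concat_eq_append]; exact M.evalFrom_append_singleton _ _ _⟩
  refine ⟨(σ → σ) × Set (σ × σ), inferInstance, N, ?_⟩
  ext w
  rw [DFA.mem_accepts]
  rw [key]
  simp only [key, hN, Set.mem_setOf_eq]
  constructor
  · intro h u v huv
    rw [DFA.mem_accepts, DFA.eval, DFA.evalFrom_of_append]
    by_contra hbad
    exact h (M.evalFrom M.start v) ⟨u, v, huv, hbad, rfl⟩
  · rintro h q ⟨u, s, hus, hbad, rfl⟩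
    exact hbad (by
      have := h u s hus
      rwa [DFA.mem_accepts, DFA.eval, DFA.evalFrom_of_append] at this)

theorem cycGeodesics_isRegular_of_geodesics_isRegular {X G : Type*} [Fintype X] [Group G]
    (f : X → G) (hinv : ∀ x : X, ∃ y : X, f y = (f x)⁻¹)
    (hgen : Subgroup.closure (Set.range f) = ⊤)
    (hreg : Language.IsRegular {w : List X | IsGeodesicWord f w}) :
    Language.IsRegular {w : List X | IsCycGeodesicWord f w} := by
  exact cycClosure_isRegular hreg
end

section
/- If languages L1 and L2 over a finite alphabet X are regular, then the insertion language L1 ← L2 := { z'wz'' : z'z'' ∈ L1, w ∈ L2 } is regular. -/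
/-- The insertion of language `L₂` into language `L₁`: all words obtained by
inserting a word of `L₂` somewhere inside a word of `L₁`. -/
def insertLang {X : Type*} (L₁ L₂ : Language X) : Language X :=
  {x | ∃ z' z'' w : List X, z' ++ z'' ∈ L₁ ∧ w ∈ L₂ ∧ x = z' ++ w ++ z''}

section InsertNFA

variable {X : Type*} {σ₁ σ₂ : Type*} (M₁ : DFA X σ₁) (M₂ : DFA X σ₂)

/-- An NFA recognizing the insertion of `M₂.accepts` into `M₁.accepts`.
States: `Sum.inl q` — simulating `M₁` before the insertion point;
`Sum.inr (Sum.inl (q, p))` — inside the inserted word, `q` is the frozen `M₁` state,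
`p` the current `M₂` state; `Sum.inr (Sum.inr r)` — after the insertion, simulating `M₁`. -/
def insNFA : NFA X (σ₁ ⊕ (σ₁ × σ₂ ⊕ σ₁)) where
  step s a :=
    match s with
    | Sum.inl q =>
        {Sum.inl (M₁.step q a), Sum.inr (Sum.inl (M₁.step q a, M₂.start))} ∪
          {t | M₂.start ∈ M₂.accept ∧ t = Sum.inr (Sum.inr (M₁.step q a))}
    | Sum.inr (Sum.inl (q, p)) =>
        {Sum.inr (Sum.inl (q, M₂.step p a))} ∪
          {t | p ∈ M₂.accept ∧ t = Sum.inr (Sum.inr (M₁.step q a))} ∪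
          {t | M₂.step p a ∈ M₂.accept ∧ t = Sum.inr (Sum.inr q)}
    | Sum.inr (Sum.inr r) => {Sum.inr (Sum.inr (M₁.step r a))}
  start :=
    {Sum.inl M₁.start, Sum.inr (Sum.inl (M₁.start, M₂.start))} ∪
      {t | M₂.start ∈ M₂.accept ∧ t = Sum.inr (Sum.inr M₁.start)}
  accept := {t | ∃ r ∈ M₁.accept, t = Sum.inr (Sum.inr r)}

/-- Soundness invariant for `insNFA`. -/
theorem insNFA_sound (x : List X) :
    ∀ s ∈ (insNFA M₁ M₂).eval x,
      s = Sum.inl (M₁.eval x) ∨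
      (∃ z' w, x = z' ++ w ∧ s = Sum.inr (Sum.inl (M₁.eval z', M₂.eval w))) ∨
      (∃ z' w z'', x = z' ++ w ++ z'' ∧ M₂.eval w ∈ M₂.accept ∧
        s = Sum.inr (Sum.inr (M₁.evalFrom (M₁.eval z') z''))) := by
  induction x using List.reverseRecOn with
  | nil =>
    intro s hs
    rcases hs with (h | h) | ⟨h2, h⟩
    · exact Or.inl h
    · exact Or.inr <| Or.inl ⟨[], [], rfl, h⟩
    · exact Or.inr <| Or.inr ⟨[], [], [], rfl, h2, h⟩
  | append_singleton x a ih =>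
    intro s hs
    rw [NFA.eval_append_singleton, NFA.mem_stepSet] at hs
    obtain ⟨t, ht, hs⟩ := hs
    rcases ih t ht with h | ⟨z', w, hx, h⟩ | ⟨z', w, z'', hx, hw, h⟩
    · subst h
      rcases hs with (h | h) | ⟨h2, h⟩
      · left; rw [h, DFA.eval_append_singleton]
      · refine Or.inr <| Or.inl ⟨x ++ [a], [], by simp, ?_⟩
        rw [h, DFA.eval_append_singleton]; rfl
      · refine Or.inr <| Or.inr ⟨x ++ [a], [], [], by simp, h2, ?_⟩
        rw [h, DFA.eval_append_singleton]; rfl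
    · subst h
      rcases hs with (h | ⟨h2, h⟩) | ⟨h2, h⟩
      · refine Or.inr <| Or.inl ⟨z', w ++ [a], by simp [hx], ?_⟩
        rw [h, DFA.eval_append_singleton]
      · refine Or.inr <| Or.inr ⟨z', w, [a], by simp [hx], h2, ?_⟩
        rw [h]; rfl
      · refine Or.inr <| Or.inr ⟨z', w ++ [a], [], by simp [hx], ?_, ?_⟩
        · rwa [DFA.eval_append_singleton]
        · rw [h]; rfl
    · subst h
      replace hs : s = Sum.inr (Sum.inr (M₁.step (M₁.evalFrom (M₁.eval z') z'') a)) := hs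
      refine Or.inr <| Or.inr ⟨z', w, z'' ++ [a], by simp [hx], hw, ?_⟩
      rw [hs, DFA.evalFrom_append_singleton]


/-- The phase-1 state is always reachable. -/
theorem insNFA_c1 (x : List X) : Sum.inl (M₁.eval x) ∈ (insNFA M₁ M₂).eval x := by
  induction x using List.reverseRecOn with
  | nil => exact Or.inl (Or.inl rfl)
  | append_singleton x a ih =>
    rw [NFA.eval_append_singleton, NFA.mem_stepSet]
    exact ⟨_, ih, Or.inl <| Or.inl <| by rw [DFA.eval_append_singleton]⟩

/-- All phase-2 states corresponding to a split are reachable. -/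
theorem insNFA_c2 (z' w : List X) :
    Sum.inr (Sum.inl (M₁.eval z', M₂.eval w)) ∈ (insNFA M₁ M₂).eval (z' ++ w) := by
  induction w using List.reverseRecOn with
  | nil =>
    rcases z'.eq_nil_or_concat with rfl | ⟨y, a, rfl⟩
    · exact Or.inl (Or.inr rfl)
    · rw [List.append_nil, List.concat_eq_append, NFA.eval_append_singleton, NFA.mem_stepSet]
      refine ⟨_, insNFA_c1 M₁ M₂ y, Or.inl <| Or.inr ?_⟩
      rw [Set.mem_singleton_iff, DFA.eval_append_singleton]; rfl
  | append_singleton w a ih =>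
    rw [← List.append_assoc, NFA.eval_append_singleton, NFA.mem_stepSet]
    refine ⟨_, ih, Or.inl <| Or.inl ?_⟩
    rw [DFA.eval_append_singleton]
    rfl

/-- All phase-3 states corresponding to a completed insertion are reachable. -/
theorem insNFA_c3 (z' w z'' : List X) (hw : M₂.eval w ∈ M₂.accept) :
    Sum.inr (Sum.inr (M₁.evalFrom (M₁.eval z') z'')) ∈
      (insNFA M₁ M₂).eval (z' ++ w ++ z'') := by
  induction z'' using List.reverseRecOn with
  | nil =>
    rcases w.eq_nil_or_concat with rfl | ⟨v, a, rfl⟩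
    · -- w = [] : the empty word of L₂ is inserted
      rcases z'.eq_nil_or_concat with rfl | ⟨y, a, rfl⟩
      · exact Or.inr ⟨hw, rfl⟩
      · rw [List.append_nil, List.append_nil, List.concat_eq_append,
          NFA.eval_append_singleton, NFA.mem_stepSet]
        refine ⟨_, insNFA_c1 M₁ M₂ y, Or.inr ⟨hw, ?_⟩⟩
        rw [DFA.eval_append_singleton]; rfl
    · rw [List.append_nil, List.concat_eq_append, ← List.append_assoc,
        NFA.eval_append_singleton, NFA.mem_stepSet]
      refine ⟨_, insNFA_c2 M₁ M₂ z' v, Or.inr ?_⟩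
      rw [List.concat_eq_append, DFA.eval_append_singleton] at hw
      exact ⟨hw, rfl⟩
  | append_singleton z'' a ih =>
    rw [← List.append_assoc, NFA.eval_append_singleton, NFA.mem_stepSet]
    refine ⟨_, ih, ?_⟩
    rw [DFA.evalFrom_append_singleton]
    rfl

theorem insNFA_accepts : (insNFA M₁ M₂).accepts = insertLang M₁.accepts M₂.accepts := by
  ext x
  constructor
  · rintro ⟨s, ⟨r, hr, rfl⟩, hs⟩
    rcases insNFA_sound M₁ M₂ x _ hs with h | ⟨z', w, hx, h⟩ | ⟨z', w, z'', hx, hw, h⟩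
    · exact absurd h (by simp)
    · exact absurd h (by simp)
    · obtain rfl : r = M₁.evalFrom (M₁.eval z') z'' := by
        simpa using h
      refine ⟨z', z'', w, ?_, hw, hx⟩
      rw [DFA.mem_accepts, DFA.eval, DFA.evalFrom_of_append]
      exact hr
  · rintro ⟨z', z'', w, hzz, hw, rfl⟩
    refine ⟨Sum.inr (Sum.inr (M₁.evalFrom (M₁.eval z') z'')), ⟨_, ?_, rfl⟩,
      insNFA_c3 M₁ M₂ z' w z'' hw⟩
    rw [DFA.mem_accepts, DFA.eval, DFA.evalFrom_of_append] at hzz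
    exact hzz

end InsertNFA

theorem insertLang_isRegular {X : Type*} [Fintype X] (L₁ L₂ : Language X)
    (h₁ : L₁.IsRegular) (h₂ : L₂.IsRegular) : (insertLang L₁ L₂).IsRegular := by
  obtain ⟨σ₁, _, M₁, rfl⟩ := h₁
  obtain ⟨σ₂, _, M₂, rfl⟩ := h₂
  classical
  exact ⟨Set (σ₁ ⊕ (σ₁ × σ₂ ⊕ σ₁)), inferInstance, (insNFA M₁ M₂).toDFA,
    by rw [NFA.toDFA_correct, insNFA_accepts]⟩
end

section
/- In the group G = ℤ² ⋊ ℤ/2ℤ with generators a, b swapped by t, the number of conjugacy classes whose minimal-length elements (over the generating set {a^{±1}, b^{±1}, t}) have length n is: 1 for n = 0, 3 for n = 1, 4k+3 for n = 2k with k ≥ 1, and 4k+4 for n = 2k+1 with k ≥ 1; consequently the conjugacy growth series equals (1+z)(1+2z+3z²−z³−z⁴)/(1−z²)². -/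
open PowerSeries

section Aux
variable {G : Type*} [Group G]

/-- normal form -/
def nf (a b t : G) (i j : ℤ) (ε : Bool) : G := a ^ i * b ^ j * (cond ε t 1)

lemma sta (a b t : G) (ht : t * t = 1) (htat : t * a * t = b) : SemiconjBy t a b := by
  unfold SemiconjBy
  have h : t * a * t * t = b * t := by rw [htat]
  rwa [mul_assoc (t*a), ht, mul_one] at h

lemma stb (a b t : G) (ht : t * t = 1) (htat : t * a * t = b) : SemiconjBy t b a := by
  unfold SemiconjBy
  rw [← htat]
  rw [← mul_assoc, ← mul_assoc, ht, one_mul]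

lemma nf_mul (a b t : G) (ht : t * t = 1) (hab : a * b = b * a) (htat : t * a * t = b)
    (i j : ℤ) (ε : Bool) (i' j' : ℤ) (ε' : Bool) :
    nf a b t i j ε * nf a b t i' j' ε' =
      nf a b t (i + cond ε j' i') (j + cond ε i' j') (xor ε ε') := by
  have hta : ∀ m : ℤ, t * a ^ m = b ^ m * t := fun m => ((sta a b t ht htat).zpow_right m).eq
  have htb : ∀ m : ℤ, t * b ^ m = a ^ m * t := fun m => ((stb a b t ht htat).zpow_right m).eq
  have hc : ∀ m n : ℤ, a ^ m * b ^ n = b ^ n * a ^ m := fun m n =>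
    ((Commute.zpow_zpow (show Commute a b from hab) m n)).eq
  cases ε
  · unfold nf
    simp only [Bool.cond_false, mul_one, Bool.false_xor]
    calc a ^ i * b ^ j * (a ^ i' * b ^ j' * cond ε' t 1)
        = a ^ i * (b ^ j * a ^ i') * (b ^ j' * cond ε' t 1) := by group
      _ = a ^ i * (a ^ i' * b ^ j) * (b ^ j' * cond ε' t 1) := by rw [hc]
      _ = (a ^ i * a ^ i') * (b ^ j * b ^ j') * cond ε' t 1 := by group
      _ = a ^ (i + i') * b ^ (j + j') * cond ε' t 1 := by rw [← zpow_add, ← zpow_add]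
  · unfold nf
    simp only [Bool.cond_true, Bool.true_xor]
    have key : a ^ i * b ^ j * t * (a ^ i' * b ^ j' * cond ε' t 1)
        = a ^ (i + j') * b ^ (j + i') * (t * cond ε' t 1) := by
      calc a ^ i * b ^ j * t * (a ^ i' * b ^ j' * cond ε' t 1)
          = a ^ i * b ^ j * (t * a ^ i') * (b ^ j' * cond ε' t 1) := by group
        _ = a ^ i * b ^ j * (b ^ i' * t) * (b ^ j' * cond ε' t 1) := by rw [hta]
        _ = a ^ i * (b ^ j * b ^ i') * ((t * b ^ j') * cond ε' t 1) := by group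
        _ = a ^ i * (b ^ j * b ^ i') * ((a ^ j' * t) * cond ε' t 1) := by rw [htb]
        _ = a ^ i * ((b ^ j * b ^ i') * a ^ j') * (t * cond ε' t 1) := by group
        _ = a ^ i * (a ^ j' * (b ^ j * b ^ i')) * (t * cond ε' t 1) := by
            rw [← zpow_add, hc, zpow_add]
        _ = (a ^ i * a ^ j') * (b ^ j * b ^ i') * (t * cond ε' t 1) := by group
        _ = a ^ (i + j') * b ^ (j + i') * (t * cond ε' t 1) := by rw [← zpow_add, ← zpow_add]
    rw [key]
    cases ε'
    · simp only [Bool.cond_false, Bool.cond_true, mul_one, Bool.not_false]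
    · simp only [Bool.cond_true, Bool.not_true, Bool.cond_false, ht]

end Aux

section Len
variable {G : Type*} [Group G] (a b t : G) (ht : t * t = 1) (hab : a * b = b * a) (htat : t * a * t = b)
  (hinj : ∀ (i j : ℤ) (ε : Bool) (i' j' : ℤ) (ε' : Bool),
      a ^ i * b ^ j * (cond ε t 1) = a ^ i' * b ^ j' * (cond ε' t 1) →
      i = i' ∧ j = j' ∧ ε = ε')
  (hsurj : ∀ g : G, ∃ (i j : ℤ) (ε : Bool), g = a ^ i * b ^ j * (cond ε t 1))

include hinj in
lemma hinj' (i j : ℤ) (ε : Bool) (i' j' : ℤ) (ε' : Bool)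
    (h : nf a b t i j ε = nf a b t i' j' ε') : i = i' ∧ j = j' ∧ ε = ε' :=
  hinj i j ε i' j' ε' h

lemma nf_one : nf a b t 0 0 false = 1 := by simp [nf]

include ht hab htat hinj hsurj in
lemma word_bound : ∀ w : List G, (∀ x ∈ w, x ∈ ({a, a⁻¹, b, b⁻¹, t} : Set G)) →
    ∀ i j : ℤ, ∀ ε : Bool, w.prod = nf a b t i j ε →
    i.natAbs + j.natAbs + cond ε 1 0 ≤ w.length := by
  intro w
  induction w with
  | nil =>
    intro _ i j ε h
    simp only [List.prod_nil] at h
    obtain ⟨h1, h2, h3⟩ := hinj' a b t hinj 0 0 false i j ε (by rw [nf_one, h])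
    simp [← h1, ← h2, ← h3]
  | cons x w ih =>
    intro hmem i j ε h
    obtain ⟨i', j', ε', hp⟩ := hsurj w.prod
    have hp' : w.prod = nf a b t i' j' ε' := hp
    have ihw := ih (fun y hy => hmem y (List.mem_cons_of_mem x hy)) i' j' ε' hp'
    rw [List.prod_cons, hp'] at h
    simp only [List.length_cons]
    have hx := hmem x List.mem_cons_self
    simp only [Set.mem_insert_iff, Set.mem_singleton_iff] at hx
    have hmul : ∀ p q : ℤ, ∀ δ : Bool, nf a b t p q δ * nf a b t i' j' ε' =
        nf a b t (p + cond δ j' i') (q + cond δ i' j') (xor δ ε') :=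
      fun p q δ => nf_mul a b t ht hab htat p q δ i' j' ε'
    rcases hx with hx | hx | hx | hx | hx
    · have hx' : x = nf a b t 1 0 false := by simp [nf, hx]
      rw [hx', hmul] at h
      obtain ⟨h1, h2, h3⟩ := hinj' a b t hinj _ _ _ _ _ _ h.symm
      subst h1; subst h2; subst h3
      simp only [Bool.cond_false, Bool.false_xor] at *
      omega
    · have hx' : x = nf a b t (-1) 0 false := by simp [nf, hx]
      rw [hx', hmul] at h
      obtain ⟨h1, h2, h3⟩ := hinj' a b t hinj _ _ _ _ _ _ h.symm
      subst h1; subst h2; subst h3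
      simp only [Bool.cond_false, Bool.false_xor] at *
      omega
    · have hx' : x = nf a b t 0 1 false := by simp [nf, hx]
      rw [hx', hmul] at h
      obtain ⟨h1, h2, h3⟩ := hinj' a b t hinj _ _ _ _ _ _ h.symm
      subst h1; subst h2; subst h3
      simp only [Bool.cond_false, Bool.false_xor] at *
      omega
    · have hx' : x = nf a b t 0 (-1) false := by simp [nf, hx]
      rw [hx', hmul] at h
      obtain ⟨h1, h2, h3⟩ := hinj' a b t hinj _ _ _ _ _ _ h.symm
      subst h1; subst h2; subst h3
      simp only [Bool.cond_false, Bool.false_xor] at *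
      omega
    · have hx' : x = nf a b t 0 0 true := by simp [nf, hx]
      rw [hx', hmul] at h
      obtain ⟨h1, h2, h3⟩ := hinj' a b t hinj _ _ _ _ _ _ h.symm
      subst h1; subst h2; subst h3
      simp only [Bool.cond_true, Bool.true_xor] at *
      cases ε' <;> simp at * <;> omega

lemma exists_word (i j : ℤ) (ε : Bool) :
    ∃ w : List G, (∀ x ∈ w, x ∈ ({a, a⁻¹, b, b⁻¹, t} : Set G)) ∧
      w.prod = nf a b t i j ε ∧ w.length = i.natAbs + j.natAbs + cond ε 1 0 := by
  obtain ⟨x, hx, hxp⟩ : ∃ x, (x = a ∨ x = a⁻¹) ∧ x ^ i.natAbs = a ^ i := by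
    rcases le_or_gt 0 i with h | h
    · exact ⟨a, Or.inl rfl, by rw [← zpow_natCast]; congr 1; omega⟩
    · exact ⟨a⁻¹, Or.inr rfl, by rw [inv_pow, ← zpow_natCast, ← zpow_neg]; congr 1; omega⟩
  obtain ⟨y, hy, hyp⟩ : ∃ y, (y = b ∨ y = b⁻¹) ∧ y ^ j.natAbs = b ^ j := by
    rcases le_or_gt 0 j with h | h
    · exact ⟨b, Or.inl rfl, by rw [← zpow_natCast]; congr 1; omega⟩
    · exact ⟨b⁻¹, Or.inr rfl, by rw [inv_pow, ← zpow_natCast, ← zpow_neg]; congr 1; omega⟩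
  refine ⟨List.replicate i.natAbs x ++ List.replicate j.natAbs y ++ (cond ε [t] []), ?_, ?_, ?_⟩
  · intro z hz
    simp only [List.mem_append, List.mem_replicate] at hz
    rcases hz with (⟨_, hz⟩ | ⟨_, hz⟩) | hz
    · subst hz; rcases hx with h | h <;> subst h <;> simp
    · subst hz; rcases hy with h | h <;> subst h <;> simp
    · cases ε <;> simp at hz
      subst hz; simp
  · rw [List.prod_append, List.prod_append, List.prod_replicate, List.prod_replicate,
      hxp, hyp]
    cases ε <;> simp [nf]
  · simp only [List.length_append, List.length_replicate]
    cases ε <;> simp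

include ht hab htat hinj hsurj in
lemma len_nf (len : G → ℕ)
    (hlen : ∀ g : G, len g = sInf {n : ℕ | ∃ w : List G,
      (∀ x ∈ w, x ∈ ({a, a⁻¹, b, b⁻¹, t} : Set G)) ∧ w.prod = g ∧ w.length = n})
    (i j : ℤ) (ε : Bool) :
    len (nf a b t i j ε) = i.natAbs + j.natAbs + cond ε 1 0 := by
  rw [hlen]
  obtain ⟨w, hw, hwp, hwl⟩ := exists_word a b t i j ε
  apply le_antisymm
  · exact Nat.sInf_le ⟨w, hw, hwp, hwl⟩
  · apply le_csInf
    · exact ⟨_, w, hw, hwp, hwl⟩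
    rintro m ⟨w', hw', hwp', hwl'⟩
    rw [← hwl']
    exact word_bound a b t ht hab htat hinj hsurj w' hw' i j ε hwp'
end Len

section Conj
variable {G : Type*} [Group G] (a b t : G)
  (ht : t * t = 1) (hab : a * b = b * a) (htat : t * a * t = b)
  (hinj : ∀ (i j : ℤ) (ε : Bool) (i' j' : ℤ) (ε' : Bool),
      a ^ i * b ^ j * (cond ε t 1) = a ^ i' * b ^ j' * (cond ε' t 1) →
      i = i' ∧ j = j' ∧ ε = ε')
  (hsurj : ∀ g : G, ∃ (i j : ℤ) (ε : Bool), g = a ^ i * b ^ j * (cond ε t 1))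

lemma isConj_of_semiconj {c g h : G} (hc : c * g = h * c) : IsConj g h :=
  isConj_iff.mpr ⟨c, by rw [hc, mul_assoc, mul_inv_cancel, mul_one]⟩

include ht hab htat in
lemma conj_false_swap (i j : ℤ) :
    IsConj (nf a b t i j false) (nf a b t j i false) := by
  apply isConj_of_semiconj (c := t)
  have h1 : t = nf a b t 0 0 true := by simp [nf]
  calc t * nf a b t i j false = nf a b t 0 0 true * nf a b t i j false := by rw [← h1]
    _ = nf a b t j i true := by rw [nf_mul a b t ht hab htat]; norm_num
    _ = nf a b t j i false * nf a b t 0 0 true := by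
        rw [nf_mul a b t ht hab htat]; norm_num
    _ = nf a b t j i false * t := by rw [← h1]

include ht hab htat in
lemma conj_true_shift (i j i' j' : ℤ) (hs : i + j = i' + j') :
    IsConj (nf a b t i j true) (nf a b t i' j' true) := by
  apply isConj_of_semiconj (c := a ^ (i' - i))
  have h1 : a ^ (i' - i) = nf a b t (i' - i) 0 false := by simp [nf]
  rw [h1, nf_mul a b t ht hab htat, nf_mul a b t ht hab htat]
  simp only [Bool.cond_false, Bool.cond_true, Bool.false_xor, Bool.true_xor, Bool.not_false]
  have e1 : i' - i + i = i' + 0 := by omega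
  have e2 : 0 + j = j' + (i' - i) := by omega
  rw [e1, e2]

include ht hab htat hinj hsurj in
lemma isConj_elim (i j : ℤ) (ε : Bool) (i' j' : ℤ) (ε' : Bool)
    (h : IsConj (nf a b t i j ε) (nf a b t i' j' ε')) :
    ε = ε' ∧ (ε = false → (i = i' ∧ j = j') ∨ (i = j' ∧ j = i')) ∧
      (ε = true → i + j = i' + j') := by
  obtain ⟨c, hc⟩ := isConj_iff.mp h
  have hc' : c * nf a b t i j ε = nf a b t i' j' ε' * c := by
    have := congrArg (· * c) hc
    simpa [mul_assoc] using this
  obtain ⟨p, q, δ, rfl⟩ := hsurj c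
  have hl : nf a b t p q δ * nf a b t i j ε =
      nf a b t (p + cond δ j i) (q + cond δ i j) (xor δ ε) :=
    nf_mul a b t ht hab htat p q δ i j ε
  have hr : nf a b t i' j' ε' * nf a b t p q δ =
      nf a b t (i' + cond ε' q p) (j' + cond ε' p q) (xor ε' δ) :=
    nf_mul a b t ht hab htat i' j' ε' p q δ
  have key : nf a b t (p + cond δ j i) (q + cond δ i j) (xor δ ε) =
      nf a b t (i' + cond ε' q p) (j' + cond ε' p q) (xor ε' δ) := by
    rw [← hl, ← hr]; exact hc'
  obtain ⟨h1, h2, h3⟩ := hinj' a b t hinj _ _ _ _ _ _ key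
  clear hc hc' hl hr key h
  cases δ <;> cases ε <;> cases ε' <;> simp at h1 h2 h3 ⊢ <;> omega
end Conj

section Clen
variable {G : Type*} [Group G] (a b t : G)
  (ht : t * t = 1) (hab : a * b = b * a) (htat : t * a * t = b)
  (hinj : ∀ (i j : ℤ) (ε : Bool) (i' j' : ℤ) (ε' : Bool),
      a ^ i * b ^ j * (cond ε t 1) = a ^ i' * b ^ j' * (cond ε' t 1) →
      i = i' ∧ j = j' ∧ ε = ε')
  (hsurj : ∀ g : G, ∃ (i j : ℤ) (ε : Bool), g = a ^ i * b ^ j * (cond ε t 1))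
  (len : G → ℕ)
  (hlen : ∀ g : G, len g = sInf {n : ℕ | ∃ w : List G,
      (∀ x ∈ w, x ∈ ({a, a⁻¹, b, b⁻¹, t} : Set G)) ∧ w.prod = g ∧ w.length = n})
  (clen : ConjClasses G → ℕ)
  (hclen : ∀ x : ConjClasses G, clen x = sInf {n : ℕ | ∃ g : G,
      ConjClasses.mk g = x ∧ len g = n})

include ht hab htat hinj hsurj hlen hclen in
lemma clen_false (i j : ℤ) :
    clen (ConjClasses.mk (nf a b t i j false)) = i.natAbs + j.natAbs := by
  have hL := len_nf a b t ht hab htat hinj hsurj len hlen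
  rw [hclen]
  have hmem : i.natAbs + j.natAbs ∈ {n : ℕ | ∃ g : G,
      ConjClasses.mk g = ConjClasses.mk (nf a b t i j false) ∧ len g = n} :=
    ⟨nf a b t i j false, rfl, by rw [hL]; simp⟩
  apply le_antisymm (Nat.sInf_le hmem)
  apply le_csInf ⟨_, hmem⟩
  rintro m ⟨g, hg, rfl⟩
  obtain ⟨i', j', ε', rfl⟩ := hsurj g
  have hcj := isConj_elim a b t ht hab htat hinj hsurj i' j' ε' i j false
    (ConjClasses.mk_eq_mk_iff_isConj.mp hg)
  obtain ⟨hε, hf, -⟩ := hcj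
  subst hε
  show i.natAbs + j.natAbs ≤ len (nf a b t i' j' false)
  rw [hL]
  rcases hf rfl with ⟨rfl, rfl⟩ | ⟨rfl, rfl⟩ <;> simp <;> omega

include ht hab htat hinj hsurj hlen hclen in
lemma clen_true (i j : ℤ) :
    clen (ConjClasses.mk (nf a b t i j true)) = (i + j).natAbs + 1 := by
  have hL := len_nf a b t ht hab htat hinj hsurj len hlen
  rw [hclen]
  have hmem : (i + j).natAbs + 1 ∈ {n : ℕ | ∃ g : G,
      ConjClasses.mk g = ConjClasses.mk (nf a b t i j true) ∧ len g = n} := by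
    refine ⟨nf a b t (i + j) 0 true, ?_, by rw [hL]; simp⟩
    exact ConjClasses.mk_eq_mk_iff_isConj.mpr
      (conj_true_shift a b t ht hab htat (i + j) 0 i j (by omega))
  apply le_antisymm (Nat.sInf_le hmem)
  apply le_csInf ⟨_, hmem⟩
  rintro m ⟨g, hg, rfl⟩
  obtain ⟨i', j', ε', rfl⟩ := hsurj g
  have hcj := isConj_elim a b t ht hab htat hinj hsurj i' j' ε' i j true
    (ConjClasses.mk_eq_mk_iff_isConj.mp hg)
  obtain ⟨hε, -, hs⟩ := hcj
  subst hε
  have := hs rfl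
  show (i + j).natAbs + 1 ≤ len (nf a b t i' j' true)
  rw [hL]
  simp only [Bool.cond_true]
  omega
end Clen

section Count

noncomputable def P0 (n : ℕ) : Finset (ℤ × ℤ) :=
  ((Finset.Icc (0:ℤ) ((n/2 : ℕ) : ℤ)).image fun i => (i, (n:ℤ) - i)) ∪
  ((Finset.Icc (-(n:ℤ)) (-1)).image fun i => (i, (n:ℤ) + i)) ∪
  ((Finset.Icc (-((n/2 : ℕ) : ℤ)) (-1)).image fun j => (-(n:ℤ) - j, j))

lemma mem_P0 (n : ℕ) (p : ℤ × ℤ) :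
    p ∈ P0 n ↔ p.1 ≤ p.2 ∧ p.1.natAbs + p.2.natAbs = n := by
  obtain ⟨x, y⟩ := p
  simp only [P0, Finset.mem_union, Finset.mem_image, Finset.mem_Icc, Prod.mk.injEq]
  constructor
  · rintro ((⟨i, hi, rfl, rfl⟩ | ⟨i, hi, rfl, rfl⟩) | ⟨j, hj, rfl, rfl⟩) <;>
      constructor <;> omega
  · rintro ⟨h1, h2⟩
    rcases le_or_gt 0 x with hx | hx
    · exact Or.inl (Or.inl ⟨x, by omega, rfl, by omega⟩)
    · rcases le_or_gt 0 y with hy | hy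
      · exact Or.inl (Or.inr ⟨x, by omega, rfl, by omega⟩)
      · exact Or.inr ⟨y, by omega, by omega, rfl⟩

lemma card_P0 (n : ℕ) : (P0 n).card = n + 2 * (n / 2) + 1 := by
  have hinj1 : Function.Injective (fun i : ℤ => (i, (n:ℤ) - i)) := fun i j h => by
    simpa using congrArg Prod.fst h
  have hinj2 : Function.Injective (fun i : ℤ => (i, (n:ℤ) + i)) := fun i j h => by
    simpa using congrArg Prod.fst h
  have hinj3 : Function.Injective (fun j : ℤ => (-(n:ℤ) - j, j)) := fun i j h => by
    simpa using congrArg Prod.snd h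
  have hd1 : Disjoint
      ((Finset.Icc (0:ℤ) ((n/2 : ℕ) : ℤ)).image fun i => (i, (n:ℤ) - i))
      ((Finset.Icc (-(n:ℤ)) (-1)).image fun i => (i, (n:ℤ) + i)) := by
    rw [Finset.disjoint_left]
    rintro p hp hq
    simp only [Finset.mem_image, Finset.mem_Icc] at hp hq
    obtain ⟨i, hi, rfl⟩ := hp
    obtain ⟨i', hi', hq⟩ := hq
    have := congrArg Prod.fst hq
    simp at this
    omega
  have hd2 : Disjoint
      (((Finset.Icc (0:ℤ) ((n/2 : ℕ) : ℤ)).image fun i => (i, (n:ℤ) - i)) ∪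
        ((Finset.Icc (-(n:ℤ)) (-1)).image fun i => (i, (n:ℤ) + i)))
      ((Finset.Icc (-((n/2 : ℕ) : ℤ)) (-1)).image fun j => (-(n:ℤ) - j, j)) := by
    rw [Finset.disjoint_left]
    rintro p hp hq
    simp only [Finset.mem_union, Finset.mem_image, Finset.mem_Icc] at hp hq
    obtain ⟨j, hj, rfl⟩ := hq
    rcases hp with ⟨i, hi, hp⟩ | ⟨i, hi, hp⟩ <;>
    · have := congrArg Prod.snd hp
      simp at this
      omega
  rw [P0, Finset.card_union_of_disjoint hd2, Finset.card_union_of_disjoint hd1,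
    Finset.card_image_of_injective _ hinj1, Finset.card_image_of_injective _ hinj2,
    Finset.card_image_of_injective _ hinj3, Int.card_Icc, Int.card_Icc, Int.card_Icc]
  omega

def P1 (n : ℕ) : Finset ℤ := if n = 0 then ∅ else {(n:ℤ) - 1, 1 - (n:ℤ)}

lemma mem_P1 (n : ℕ) (s : ℤ) : s ∈ P1 n ↔ s.natAbs + 1 = n := by
  unfold P1
  split
  · simp; omega
  · simp only [Finset.mem_insert, Finset.mem_singleton]
    omega

lemma card_P1 (n : ℕ) : (P1 n).card = if n = 0 then 0 else if n = 1 then 1 else 2 := by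
  unfold P1
  split
  · simp
  · split
    · subst ‹n = 1›; norm_num
    · rw [Finset.card_insert_of_notMem (by simp; omega), Finset.card_singleton]
lemma card_P1_two (n : ℕ) (h : 2 ≤ n) : (P1 n).card = 2 := by
  unfold P1
  rw [if_neg (by omega), Finset.card_insert_of_notMem (by simp; omega),
    Finset.card_singleton]
end Count

section Main
variable {G : Type*} [Group G] (a b t : G)
  (ht : t * t = 1) (hab : a * b = b * a) (htat : t * a * t = b)
  (hinj : ∀ (i j : ℤ) (ε : Bool) (i' j' : ℤ) (ε' : Bool),
      a ^ i * b ^ j * (cond ε t 1) = a ^ i' * b ^ j' * (cond ε' t 1) →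
      i = i' ∧ j = j' ∧ ε = ε')
  (hsurj : ∀ g : G, ∃ (i j : ℤ) (ε : Bool), g = a ^ i * b ^ j * (cond ε t 1))
  (len : G → ℕ)
  (hlen : ∀ g : G, len g = sInf {n : ℕ | ∃ w : List G,
      (∀ x ∈ w, x ∈ ({a, a⁻¹, b, b⁻¹, t} : Set G)) ∧ w.prod = g ∧ w.length = n})
  (clen : ConjClasses G → ℕ)
  (hclen : ∀ x : ConjClasses G, clen x = sInf {n : ℕ | ∃ g : G,
      ConjClasses.mk g = x ∧ len g = n})

include ht hab htat hinj hsurj hlen hclen in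
lemma count_eq (n : ℕ) :
    {x : ConjClasses G | clen x = n}.ncard = (P0 n).card + (P1 n).card := by
  classical
  have hCF := clen_false a b t ht hab htat hinj hsurj len hlen clen hclen
  have hCT := clen_true a b t ht hab htat hinj hsurj len hlen clen hclen
  set F : (ℤ × ℤ) ⊕ ℤ → ConjClasses G :=
    Sum.elim (fun p => ConjClasses.mk (nf a b t p.1 p.2 false))
      (fun s => ConjClasses.mk (nf a b t s 0 true)) with hF
  have hset : {x : ConjClasses G | clen x = n} = ↑(((P0 n).disjSum (P1 n)).image F) := by
    ext x
    simp only [Set.mem_setOf_eq, Finset.coe_image, Set.mem_image, Finset.mem_coe,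
      Finset.mem_disjSum]
    constructor
    · intro hx
      obtain ⟨g, rfl⟩ := ConjClasses.exists_rep x
      obtain ⟨i, j, ε, rfl⟩ := hsurj g
      cases ε
      · have hv := hCF i j
        rcases le_total i j with hij | hij
        · exact ⟨Sum.inl (i, j), Or.inl ⟨(i, j), (mem_P0 n (i, j)).mpr ⟨hij, by
            rw [show ConjClasses.mk (a ^ i * b ^ j * cond false t 1)
              = ConjClasses.mk (nf a b t i j false) from rfl, hv] at hx; omega⟩, rfl⟩, rfl⟩
        · have hswap : ConjClasses.mk (nf a b t j i false)
              = ConjClasses.mk (nf a b t i j false) :=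
            ConjClasses.mk_eq_mk_iff_isConj.mpr (conj_false_swap a b t ht hab htat j i)
          refine ⟨Sum.inl (j, i), Or.inl ⟨(j, i), (mem_P0 n (j, i)).mpr ⟨hij, by
            rw [show ConjClasses.mk (a ^ i * b ^ j * cond false t 1)
              = ConjClasses.mk (nf a b t i j false) from rfl, hv] at hx; omega⟩, rfl⟩, ?_⟩
          exact hswap
      · have hv := hCT i j
        have hx' : (i + j).natAbs + 1 = n := by
          rw [show ConjClasses.mk (a ^ i * b ^ j * cond true t 1)
            = ConjClasses.mk (nf a b t i j true) from rfl, hv] at hx; omega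
        refine ⟨Sum.inr (i + j), Or.inr ⟨i + j, (mem_P1 n (i + j)).mpr hx', rfl⟩, ?_⟩
        show ConjClasses.mk (nf a b t (i + j) 0 true) = _
        exact ConjClasses.mk_eq_mk_iff_isConj.mpr
          (conj_true_shift a b t ht hab htat (i + j) 0 i j (by omega))
    · rintro ⟨p, hp, rfl⟩
      rcases hp with ⟨q, hq, rfl⟩ | ⟨s, hs, rfl⟩
      · rw [hF]
        simp only [Sum.elim_inl]
        rw [hCF]
        exact ((mem_P0 n q).mp hq).2
      · rw [hF]
        simp only [Sum.elim_inr]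
        rw [hCT]
        have := (mem_P1 n s).mp hs
        omega
  rw [hset, Set.ncard_coe_finset]
  rw [Finset.card_image_of_injOn, Finset.card_disjSum]
  intro p hp q hq hpq
  rcases p with p | sp <;> rcases q with q | sq
  · simp only [hF, Sum.elim_inl] at hpq
    have hcj := isConj_elim a b t ht hab htat hinj hsurj p.1 p.2 false q.1 q.2 false
      (ConjClasses.mk_eq_mk_iff_isConj.mp hpq)
    obtain ⟨-, hpair, -⟩ := hcj
    have h1 : p ∈ P0 n := Finset.inl_mem_disjSum.mp (Finset.mem_coe.mp hp)
    have h2 : q ∈ P0 n := Finset.inl_mem_disjSum.mp (Finset.mem_coe.mp hq)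
    have hm1 := ((mem_P0 n p).mp h1).1
    have hm2 := ((mem_P0 n q).mp h2).1
    obtain ⟨x1, x2⟩ := p; obtain ⟨y1, y2⟩ := q
    simp only at hm1 hm2
    rcases hpair rfl with ⟨h1', h2'⟩ | ⟨h1', h2'⟩ <;> simp only at h1' h2' <;>
      (congr 1; exact Prod.ext (by omega) (by omega))
  · simp only [hF, Sum.elim_inl, Sum.elim_inr] at hpq
    have hcj := isConj_elim a b t ht hab htat hinj hsurj p.1 p.2 false sq 0 true
      (ConjClasses.mk_eq_mk_iff_isConj.mp hpq)
    exact absurd hcj.1 (by decide)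
  · simp only [hF, Sum.elim_inl, Sum.elim_inr] at hpq
    have hcj := isConj_elim a b t ht hab htat hinj hsurj sp 0 true q.1 q.2 false
      (ConjClasses.mk_eq_mk_iff_isConj.mp hpq)
    exact absurd hcj.1 (by decide)
  · simp only [hF, Sum.elim_inr] at hpq
    have hcj := isConj_elim a b t ht hab htat hinj hsurj sp 0 true sq 0 true
      (ConjClasses.mk_eq_mk_iff_isConj.mp hpq)
    have := hcj.2.2 rfl
    simp only [Sum.inr.injEq]
    omega
end Main


set_option maxHeartbeats 1000000 in
lemma series_eq (c : ℕ → ℕ) (h0 : c 0 = 1) (h1 : c 1 = 3)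
    (hk : ∀ k : ℕ, 1 ≤ k → c (2*k) = 4*k+3 ∧ c (2*k+1) = 4*k+4) :
    (PowerSeries.mk fun n => (c n : ℤ)) * (1 - X^2)^2 =
      (1+X)*(1+2*X+3*X^2-X^3-X^4) := by
  set f : ℤ⟦X⟧ := PowerSeries.mk fun n => (c n : ℤ) with hf
  have hL : f * (1-X^2)^2 = f - (f*X^2 + f*X^2) + f*X^4 := by ring
  have hR : ((1+X)*(1+2*X+3*X^2-X^3-X^4) : ℤ⟦X⟧) =
      1 + (X^1 + X^1 + X^1) + (X^2+X^2+X^2+X^2+X^2) + (X^3+X^3) - (X^4+X^4) - X^5 := by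
    ring
  rw [hL, hR]
  ext n
  have e2 := (hk 1 le_rfl)
  have e4 := (hk 2 (by omega))
  simp only [map_add, map_sub, coeff_mul_X_pow', coeff_one, coeff_X_pow, hf, coeff_mk]
  rcases Nat.lt_or_ge n 6 with h | h
  · interval_cases n <;> norm_num [h0, h1, e2.1, e2.2, e4.1, e4.2]
  · have hv : ∀ m : ℕ, 2 ≤ m → 6 ≤ m + 4 → True := fun _ _ _ => trivial
    rcases Nat.even_or_odd n with ⟨k, hn⟩ | ⟨k, hn⟩
    · have hk3 : 3 ≤ k := by omega
      have v1 : c n = 4*k+3 := by rw [show n = 2*k by omega]; exact (hk k (by omega)).1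
      have v2 : c (n-2) = 4*(k-1)+3 := by
        rw [show n-2 = 2*(k-1) by omega]; exact (hk (k-1) (by omega)).1
      have v3 : c (n-4) = 4*(k-2)+3 := by
        rw [show n-4 = 2*(k-2) by omega]; exact (hk (k-2) (by omega)).1
      rw [v1, v2, v3]
      split_ifs <;> omega
    · have hk3 : 2 ≤ k := by omega
      have v1 : c n = 4*k+4 := by rw [show n = 2*k+1 by omega]; exact (hk k (by omega)).2
      have v2 : c (n-2) = 4*(k-1)+4 := by
        rw [show n-2 = 2*(k-1)+1 by omega]; exact (hk (k-1) (by omega)).2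
      have v3 : c (n-4) = 4*(k-2)+4 := by
        rw [show n-4 = 2*(k-2)+1 by omega]; exact (hk (k-2) (by omega)).2
      rw [v1, v2, v3]
      split_ifs <;> omega



open PowerSeries

/-- In `G = ℤ² ⋊ ℤ/2ℤ = ⟨a,b,t ∣ t² = 1, ab = ba, tat = b⟩` with generating set
`Z = {a^{±1}, b^{±1}, t}`, the number `c n` of conjugacy classes of minimal
length `n` is `1, 3, 4k+3 (n = 2k, k ≥ 1), 4k+4 (n = 2k+1, k ≥ 1)`, and
consequently the conjugacy growth series is
`(1+z)(1+2z+3z²−z³−z⁴)/(1−z²)²` (stated multiplied through by `(1−z²)²`). -/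
theorem conjugacy_growth_Z2_semidirect_Z2 {G : Type*} [Group G]
    (a b t : G)
    (ht : t * t = 1) (hab : a * b = b * a) (htat : t * a * t = b)
    (hsurj : ∀ g : G, ∃ (i j : ℤ) (ε : Bool), g = a ^ i * b ^ j * (cond ε t 1))
    (hinj : ∀ (i j : ℤ) (ε : Bool) (i' j' : ℤ) (ε' : Bool),
      a ^ i * b ^ j * (cond ε t 1) = a ^ i' * b ^ j' * (cond ε' t 1) →
      i = i' ∧ j = j' ∧ ε = ε')
    (len : G → ℕ)
    (hlen : ∀ g : G, len g = sInf {n : ℕ | ∃ w : List G,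
      (∀ x ∈ w, x ∈ ({a, a⁻¹, b, b⁻¹, t} : Set G)) ∧ w.prod = g ∧ w.length = n})
    (clen : ConjClasses G → ℕ)
    (hclen : ∀ x : ConjClasses G, clen x = sInf {n : ℕ | ∃ g : G,
      ConjClasses.mk g = x ∧ len g = n})
    (c : ℕ → ℕ) (hc : ∀ n : ℕ, c n = Set.ncard {x : ConjClasses G | clen x = n}) :
    c 0 = 1 ∧ c 1 = 3 ∧
    (∀ k : ℕ, 1 ≤ k → c (2 * k) = 4 * k + 3 ∧ c (2 * k + 1) = 4 * k + 4) ∧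
    (PowerSeries.mk fun n => (c n : ℤ)) * (1 - X ^ 2) ^ 2 =
      (1 + X) * (1 + 2 * X + 3 * X ^ 2 - X ^ 3 - X ^ 4) := by
  have hcount := count_eq a b t ht hab htat hinj hsurj len hlen clen hclen
  have hcn : ∀ n, c n = (P0 n).card + (P1 n).card := fun n => by
    rw [hc, hcount]
  have h0 : c 0 = 1 := by rw [hcn, card_P0, card_P1]; norm_num
  have h1 : c 1 = 3 := by rw [hcn, card_P0, card_P1]; norm_num
  have hk : ∀ k : ℕ, 1 ≤ k → c (2 * k) = 4 * k + 3 ∧ c (2 * k + 1) = 4 * k + 4 := by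
    intro k hkk
    constructor <;> rw [hcn, card_P0, card_P1_two _ (by omega)] <;> omega
  exact ⟨h0, h1, hk, series_eq c h0 h1 hk⟩
end

section
/- Let G be a group with finite inverse-closed generating set X. Suppose every cyclic permutation of a word w over X is geodesic, and some positive power w^j exists such that w^j is geodesic for all j ≥ 1. If w is conjugate in G to an element of strictly smaller length than l(w), then for sufficiently large j the word w^j is not geodesic — a contradiction. Hence if w^j is geodesic for all j ≥ 1 and l(w) ≥ 1, then w is a conjugacy geodesic. -/
/-- A word is a conjugacy geodesic if no shorter word represents a conjugate
of the element it represents. -/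
def IsConjGeodesicWord {X G : Type*} [Group G] (f : X → G) (w : List X) : Prop :=
  ∀ v : List X, IsConj (wordProd f v) (wordProd f w) → w.length ≤ v.length

lemma wordProd_append {X G : Type*} [Group G] (f : X → G) (a b : List X) :
    wordProd f (a ++ b) = wordProd f a * wordProd f b := by
  simp [wordProd]

lemma wordProd_replicate_flatten {X G : Type*} [Group G] (f : X → G) (w : List X) (j : ℕ) :
    wordProd f (List.replicate j w).flatten = (wordProd f w) ^ j := by
  induction j with
  | zero => simp [wordProd]
  | succ n ih =>
    rw [List.replicate_succ, List.flatten_cons, wordProd_append, ih, pow_succ']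

lemma exists_word_s15 {X G : Type*} [Group G] (f : X → G)
    (hinv : ∀ x : X, ∃ y : X, f y = (f x)⁻¹)
    (hgen : Subgroup.closure (Set.range f) = ⊤) (g : G) :
    ∃ u : List X, wordProd f u = g := by
  have hg : g ∈ Subgroup.closure (Set.range f) := hgen ▸ Subgroup.mem_top g
  induction hg using Subgroup.closure_induction with
  | mem x hx =>
    obtain ⟨a, ha⟩ := hx
    exact ⟨[a], by simp [wordProd, ha]⟩
  | one => exact ⟨[], by simp [wordProd]⟩
  | mul a b _ _ iha ihb =>
    obtain ⟨u, hu⟩ := iha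
    obtain ⟨v, hv⟩ := ihb
    exact ⟨u ++ v, by rw [wordProd_append, hu, hv]⟩
  | inv a _ iha =>
    obtain ⟨u, hu⟩ := iha
    choose g hg using hinv
    refine ⟨(u.map g).reverse, ?_⟩
    rw [← hu]
    clear hu
    induction u with
    | nil => simp [wordProd]
    | cons x t ih =>
      rw [List.map_cons, List.reverse_cons, wordProd_append, ih]
      simp [wordProd, hg x]

/-- If `w` is a nonempty word all of whose powers `w^j` (`j ≥ 1`) are geodesic,
then `w` is a conjugacy geodesic. -/
theorem isConjGeodesicWord_of_powers_geodesic {X G : Type*} [Group G]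
    (f : X → G) (hinv : ∀ x : X, ∃ y : X, f y = (f x)⁻¹)
    (hgen : Subgroup.closure (Set.range f) = ⊤)
    (w : List X) (hw : 1 ≤ w.length)
    (hpow : ∀ j : ℕ, 1 ≤ j → IsGeodesicWord f (List.replicate j w).flatten) :
    IsConjGeodesicWord f w := by
  intro v hconj
  by_contra hlt
  push_neg at hlt
  obtain ⟨c, hc⟩ := hconj
  obtain ⟨u, hu⟩ := exists_word_s15 f hinv hgen c
  obtain ⟨u', hu'⟩ := exists_word_s15 f hinv hgen c⁻¹
  set U := u.length + u'.length with hU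
  set j := U + 1 with hj
  have hj1 : 1 ≤ j := Nat.le_add_left 1 U
  have hprod : wordProd f (u ++ (List.replicate j v).flatten ++ u')
      = wordProd f (List.replicate j w).flatten := by
    rw [wordProd_append, wordProd_append, wordProd_replicate_flatten,
      wordProd_replicate_flatten, hu, hu']
    have h2 : (c : G) * wordProd f v ^ j = wordProd f w ^ j * c := (hc.pow_right j)
    rw [mul_inv_eq_iff_eq_mul, h2]
  have hle := hpow j hj1 _ hprod
  rw [List.length_flatten, List.map_replicate, List.sum_replicate, smul_eq_mul] at hle
  simp only [List.length_append, List.length_flatten, List.map_replicate,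
    List.sum_replicate, smul_eq_mul] at hle
  have hv1 : v.length + 1 ≤ w.length := hlt
  have h3 : j * (v.length + 1) ≤ u.length + j * v.length + u'.length :=
    le_trans (Nat.mul_le_mul_left j hv1) hle
  rw [Nat.mul_add, Nat.mul_one] at h3
  have : j ≤ U := by omega
  omega
end
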